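/- Let f : ℝ^d → ℝ and x ∈ ℝ^d. Assume each foreground function N_j is twice continuously differentiable on ℝ^d and f is twice continuously differentiable on ℝ^d. Suppose the background basis reproduces f at every foreground node, i.e. Σ_{I=1}^{NP} Ψ_I(y_j) f(x_I) = f(y_j) for every j = 1,…,ν, and the second derivatives of the foreground basis reproduce the second derivative of f at x, i.e. Σ_{j=1}^{ν} f(y_j) • D²N_j(x) = D²f(x), where D² denotes the second iterated Fréchet derivative. Then the second derivatives of the interpolated basis satisfy the second-order reproducing condition: Σ_{I=1}^{NP} f(x_I) • D²Ψ̂_I(x) = D²f(x). -/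

import Mathlib

set_option maxHeartbeats 1000000

/-- If the foreground functions and `f` are twice continuously
differentiable, the background basis reproduces `f` at the foreground nodes, and the
second derivatives of the foreground basis reproduce the second derivative of `f` at
`x`, then the second derivatives of the interpolated basis
`Ψ̂_I(x) = Σ_j Ψ_I(y_j) N_j(x)` satisfy the second-order reproducing condition. -/
theorem int_rkpm_second_derivative_reproducing_condition
    {d NP ν : ℕ}
    (Ψ : Fin NP → (Fin d → ℝ) → ℝ)
    (N : Fin ν → (Fin d → ℝ) → ℝ)
    (xI : Fin NP → (Fin d → ℝ))
    (y : Fin ν → (Fin d → ℝ))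
    (f : (Fin d → ℝ) → ℝ)
    (x : Fin d → ℝ)
    (hNsmooth : ∀ j : Fin ν, ContDiff ℝ 2 (N j))
    (hfsmooth : ContDiff ℝ 2 f)
    (hΨ : ∀ j : Fin ν, (∑ I : Fin NP, Ψ I (y j) * f (xI I)) = f (y j))
    (hD2N : (∑ j : Fin ν, f (y j) • iteratedFDeriv ℝ 2 (N j) x) =
        iteratedFDeriv ℝ 2 f x) :
    (∑ I : Fin NP,
        f (xI I) •
          iteratedFDeriv ℝ 2 (fun z => ∑ j : Fin ν, Ψ I (y j) * N j z) x) =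
      iteratedFDeriv ℝ 2 f x := by
  have key : ∀ I : Fin NP,
      iteratedFDeriv ℝ 2 (fun z => ∑ j : Fin ν, Ψ I (y j) * N j z) x =
        ∑ j : Fin ν, Ψ I (y j) • iteratedFDeriv ℝ 2 (N j) x := by
    intro I
    have h1 : iteratedFDeriv ℝ 2 (∑ j : Fin ν, (fun z => Ψ I (y j) • N j z) ·) =
        ∑ j : Fin ν, iteratedFDeriv ℝ 2 (fun z => Ψ I (y j) • N j z) :=
      iteratedFDeriv_sum (fun j _ => (hNsmooth j).const_smul _)
    have h2 := congrFun h1 x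
    simp only [Finset.sum_apply, smul_eq_mul] at h2
    rw [h2]
    exact Finset.sum_congr rfl fun j _ =>
      iteratedFDeriv_const_smul_apply' (R := ℝ) (a := Ψ I (y j)) (f := N j) (hNsmooth j).contDiffAt
  simp_rw [key, Finset.smul_sum, smul_smul]
  rw [Finset.sum_comm]
  calc ∑ j : Fin ν, ∑ I : Fin NP, (f (xI I) * Ψ I (y j)) • iteratedFDeriv ℝ 2 (N j) x
      = ∑ j : Fin ν, f (y j) • iteratedFDeriv ℝ 2 (N j) x := by
        refine Finset.sum_congr rfl fun j _ => ?_
        rw [← Finset.sum_smul]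
        congr 1
        rw [← hΨ j]
        exact Finset.sum_congr rfl fun I _ => mul_comm _ _
    _ = iteratedFDeriv ℝ 2 f x := hD2N
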